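/- arXiv:2211.00997 — 5 statements merged into one kernel-verified Lean document; each statement's English description precedes it below -/
import Mathlib

section
/- Let H be a real Hilbert space, f : H → ℝ convex and Fréchet differentiable, g : H → ℝ ∪ {∞} proper convex lower semicontinuous, and P : H → H a bounded linear positive semidefinite self-adjoint operator. For u ∈ H, let v be a minimizer over w ∈ H of ⟨∇f(u), w⟩ − ⟨u, w⟩_P + (1/2)‖w‖_P² + g(w), and define D(u) = ⟨∇f(u), u − v⟩ + g(u) − g(v) − (1/2)‖u − v‖_P². Then for every minimizer u* of f + g, D(u) + (1/2)‖u − v‖_P² ≥ r(u) − ‖u − v‖_P · ‖u* − v‖_P, where r(u) = (f+g)(u) − inf(f+g) and ‖x‖_P² = ⟨x, Px⟩. -/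
open RealInnerProductSpace


-- Cauchy–Schwarz for a PSD symmetric form
theorem psd_cauchy_schwarz {H : Type*} [NormedAddCommGroup H] [InnerProductSpace ℝ H]
    (P : H →L[ℝ] H) (hP_sa : ∀ x y : H, ⟪P x, y⟫ = ⟪x, P y⟫)
    (hP_pos : ∀ x : H, 0 ≤ ⟪x, P x⟫) (a b : H) :
    -(Real.sqrt ⟪a, P a⟫ * Real.sqrt ⟪b, P b⟫) ≤ ⟪a, P b⟫ := by
  have hsym : ∀ x y : H, ⟪x, P y⟫ = ⟪y, P x⟫ := fun x y => by
    rw [← hP_sa, real_inner_comm]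
  have hq : ∀ t : ℝ, 0 ≤ ⟪b, P b⟫ * (t * t) + (2 * ⟪a, P b⟫) * t + ⟪a, P a⟫ := by
    intro t
    have := hP_pos (a + t • b)
    simp only [inner_add_left, inner_add_right, map_add, map_smul, inner_smul_left,
      inner_smul_right, RingHom.id_apply, starRingEnd_apply, star_trivial, ContinuousLinearMap.coe_smul',
      Pi.smul_apply, smul_eq_mul] at this
    rw [hsym b a] at this
    nlinarith [this]
  have hd := discrim_le_zero hq
  rw [discrim] at hd
  set A := ⟪a, P a⟫
  set B := ⟪a, P b⟫
  set C := ⟪b, P b⟫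
  have hA : 0 ≤ A := hP_pos a
  have hC : 0 ≤ C := hP_pos b
  have hs : Real.sqrt A * Real.sqrt C ≥ 0 := by positivity
  have hsq : (Real.sqrt A * Real.sqrt C) ^ 2 = A * C := by
    rw [mul_pow, Real.sq_sqrt hA, Real.sq_sqrt hC]
  nlinarith [sq_nonneg (B + Real.sqrt A * Real.sqrt C)]

-- convex gradient inequality
theorem convex_grad_ineq {H : Type*} [NormedAddCommGroup H] [InnerProductSpace ℝ H]
    [CompleteSpace H] (f : H → ℝ) (p : H) (u y : H)
    (hf : ConvexOn ℝ Set.univ f) (hf' : HasGradientAt f p u) :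
    f u + ⟪p, y - u⟫ ≤ f y := by
  set d := y - u with hd
  have hc : ∀ t : ℝ, HasDerivAt (fun t : ℝ => u + t • d) d t := by
    intro t
    simpa using ((hasDerivAt_id t).smul_const d).const_add u
  have hcomp : HasDerivAt (fun t : ℝ => f (u + t • d)) ⟪p, d⟫ 0 := by
    have h0 : HasFDerivAt f ((InnerProductSpace.toDual ℝ H) p) (u + (0:ℝ) • d) := by
      simpa using hf'.hasFDerivAt
    have := h0.comp_hasDerivAt 0 (hc 0)
    simpa [InnerProductSpace.toDual_apply_apply, Function.comp_def] using this
  have hslope : Filter.Tendsto (slope (fun t : ℝ => f (u + t • d)) 0) (nhdsWithin 0 (Set.Ioi 0))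
      (nhds ⟪p, d⟫) := by
    have := hasDerivAt_iff_tendsto_slope.mp hcomp
    exact this.mono_left (nhdsWithin_mono 0 (fun x hx => ne_of_gt hx))
  have hev : ∀ᶠ t in nhdsWithin (0:ℝ) (Set.Ioi 0),
      slope (fun t : ℝ => f (u + t • d)) 0 t ≤ f y - f u := by
    filter_upwards [Ioc_mem_nhdsGT_of_mem (Set.left_mem_Ico.mpr one_pos)] with t ht
    have ht0 : 0 < t := ht.1
    have ht1 : t ≤ 1 := ht.2
    have hconv := hf.2 (Set.mem_univ u) (Set.mem_univ y) (by linarith : (0:ℝ) ≤ 1 - t)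
      (le_of_lt ht0) (by ring)
    have heq : (1 - t) • u + t • y = u + t • d := by
      rw [hd]; module
    rw [heq] at hconv
    rw [slope_def_field]
    simp only [sub_zero, zero_smul, add_zero]
    simp only [smul_eq_mul] at hconv
    rw [div_le_iff₀ ht0]
    nlinarith [hconv]
  have := le_of_tendsto hslope hev
  linarith [this]


/-- Lemma 1, part 1 of the HPGCG analysis. -/
theorem hpgcg_lemma1_part1
    {H : Type*} [NormedAddCommGroup H] [InnerProductSpace ℝ H] [CompleteSpace H]
    (f : H → ℝ) (f' : H → H) (g : H → ℝ) (P : H →L[ℝ] H)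
    (hf : ConvexOn ℝ Set.univ f)
    (hf' : ∀ x, HasGradientAt f (f' x) x)
    (hg : ConvexOn ℝ Set.univ g)
    (hg_lsc : LowerSemicontinuous g)
    (hP_sa : ∀ x y : H, ⟪P x, y⟫ = ⟪x, P y⟫)
    (hP_pos : ∀ x : H, 0 ≤ ⟪x, P x⟫)
    (u v ustar : H)
    -- v is a minimizer of w ↦ ⟨∇f(u), w⟩ − ⟨u, w⟩_P + (1/2)‖w‖_P² + g(w)
    (hv : ∀ w : H,
      ⟪f' u, v⟫ - ⟪u, P v⟫ + (1/2) * ⟪v, P v⟫ + g v ≤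
      ⟪f' u, w⟫ - ⟪u, P w⟫ + (1/2) * ⟪w, P w⟫ + g w)
    -- u* is a minimizer of f + g
    (hustar : ∀ w : H, f ustar + g ustar ≤ f w + g w) :
    -- D(u) + (1/2)‖u − v‖_P² ≥ r(u) − ‖u − v‖_P ‖u* − v‖_P
    (⟪f' u, u - v⟫ + g u - g v - (1/2) * ⟪u - v, P (u - v)⟫)
      + (1/2) * ⟪u - v, P (u - v)⟫ ≥
    (f u + g u - (f ustar + g ustar))
      - Real.sqrt ⟪u - v, P (u - v)⟫ * Real.sqrt ⟪ustar - v, P (ustar - v)⟫ := by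
  have hsym : ∀ x y : H, ⟪x, P y⟫ = ⟪y, P x⟫ := fun x y => by rw [← hP_sa, real_inner_comm]
  have h1 : f u + ⟪f' u, ustar - u⟫ ≤ f ustar := convex_grad_ineq f (f' u) u ustar hf (hf' u)
  have h3 := psd_cauchy_schwarz P hP_sa hP_pos (u - v) (ustar - v)
  have hstep2 : 0 ≤ ⟪f' u, ustar - v⟫ - ⟪u - v, P (ustar - v)⟫ + (g ustar - g v) := by
    have hkey : ∀ t ∈ Set.Ioc (0:ℝ) 1,
        0 ≤ ⟪f' u, ustar - v⟫ - ⟪u - v, P (ustar - v)⟫ + (g ustar - g v)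
          + (t/2) * ⟪ustar - v, P (ustar - v)⟫ := by
      intro t ht
      have h1' := hv (v + t • (ustar - v))
      have hgc := hg.2 (Set.mem_univ v) (Set.mem_univ ustar)
        (by linarith [ht.1, ht.2] : (0:ℝ) ≤ 1 - t) (le_of_lt ht.1) (by ring)
      have heq : (1 - t) • v + t • ustar = v + t • (ustar - v) := by module
      rw [heq] at hgc
      simp only [smul_eq_mul] at hgc
      simp only [map_add, map_smul, map_sub, inner_add_left, inner_add_right, inner_smul_left,
        inner_smul_right, inner_sub_left, inner_sub_right, starRingEnd_apply, star_trivial,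
        ContinuousLinearMap.coe_smul', Pi.smul_apply, smul_eq_mul] at h1' ⊢
      have hs1 := hsym v ustar
      have hs2 := hsym u ustar
      nlinarith [h1', hgc, ht.1]
    have htend : Filter.Tendsto (fun t : ℝ =>
        ⟪f' u, ustar - v⟫ - ⟪u - v, P (ustar - v)⟫ + (g ustar - g v)
          + (t/2) * ⟪ustar - v, P (ustar - v)⟫)
        (nhdsWithin 0 (Set.Ioi 0))
        (nhds (⟪f' u, ustar - v⟫ - ⟪u - v, P (ustar - v)⟫ + (g ustar - g v))) := by
      have hcont : ContinuousAt (fun t : ℝ =>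
          ⟪f' u, ustar - v⟫ - ⟪u - v, P (ustar - v)⟫ + (g ustar - g v)
            + (t/2) * ⟪ustar - v, P (ustar - v)⟫) 0 := by fun_prop
      have h := hcont.tendsto.mono_left (nhdsWithin_le_nhds (s := Set.Ioi (0:ℝ)))
      simpa using h
    exact ge_of_tendsto htend (by
      filter_upwards [Ioc_mem_nhdsGT_of_mem (Set.left_mem_Ico.mpr one_pos)] with t ht
        using hkey t ht)
  simp only [inner_sub_left, inner_sub_right] at h1 hstep2 h3 ⊢
  linarith
end

section
/- With the setup of the hybrid proximal generalized conditional gradient analysis: for u ∈ H, v a minimizer of w ↦ ⟨∇f(u), w⟩ − ⟨u, w⟩_P + (1/2)‖w‖_P² + g(w), D(u) = ⟨∇f(u), u − v⟩ + g(u) − g(v) − (1/2)‖u − v‖_P², θ ∈ [0,1], and u* any minimizer of f + g, the inequality θ(D(u) + (1/2)‖u − v‖_P²) ≥ θ·r(u) − (1/2)‖u − u*‖_P² + (1/2)‖(u + θ(v − u)) − u*‖_P² + (θ/2)(2 − θ)‖u − v‖_P² holds, where r(u) = (f+g)(u) − inf(f+g). -/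
open RealInnerProductSpace

lemma hpgcg_grad_ineq {H : Type*} [NormedAddCommGroup H] [InnerProductSpace ℝ H]
    [CompleteSpace H]
    (f : H → ℝ) (hf : ConvexOn ℝ Set.univ f) {u w gu : H}
    (h : HasGradientAt f gu u) : f u + ⟪gu, w - u⟫ ≤ f w := by
  have hL : HasDerivAt (fun t : ℝ => u + t • (w - u)) (w - u) 0 := by
    simpa using ((hasDerivAt_id (0:ℝ)).smul_const (w - u)).const_add u
  have hF : HasFDerivAt f (InnerProductSpace.toDual ℝ H gu) u :=
    (hasGradientAt_iff_hasFDerivAt).1 h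
  have hF0 : HasFDerivAt f (InnerProductSpace.toDual ℝ H gu)
      ((fun t : ℝ => u + t • (w - u)) 0) := by simpa using hF
  have hd : HasDerivAt (fun t : ℝ => f (u + t • (w - u))) ⟪gu, w - u⟫ 0 := by
    have h2 := hF0.comp_hasDerivAt 0 hL
    simp [Function.comp] at h2
    exact h2
  have hconv : ConvexOn ℝ Set.univ (fun t : ℝ => f (u + t • (w - u))) := by
    have := hf.comp_affineMap (AffineMap.lineMap u w)
    have he : (fun t : ℝ => f (u + t • (w - u))) = f ∘ (AffineMap.lineMap u w) := by
      funext t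
      simp only [AffineMap.lineMap_apply, Function.comp_apply, vsub_eq_sub, vadd_eq_add]
      rw [add_comm]
    rw [he]
    simpa using this
  have := hconv.le_slope_of_hasDerivAt (Set.mem_univ (0:ℝ)) (Set.mem_univ (1:ℝ))
    zero_lt_one hd
  simp [slope_def_field] at this
  linarith

/-- Lemma 1, part 2 of the HPGCG analysis. -/
theorem hpgcg_lemma1_part2
    {H : Type*} [NormedAddCommGroup H] [InnerProductSpace ℝ H] [CompleteSpace H]
    (f : H → ℝ) (f' : H → H) (g : H → ℝ) (P : H →L[ℝ] H)
    (hf : ConvexOn ℝ Set.univ f)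
    (hf' : ∀ x, HasGradientAt f (f' x) x)
    (hg : ConvexOn ℝ Set.univ g)
    (hg_lsc : LowerSemicontinuous g)
    (hP_sa : ∀ x y : H, ⟪P x, y⟫ = ⟪x, P y⟫)
    (hP_pos : ∀ x : H, 0 ≤ ⟪x, P x⟫)
    (u v ustar : H) (θ : ℝ) (hθ : θ ∈ Set.Icc (0:ℝ) 1)
    -- v is a minimizer of w ↦ ⟨∇f(u), w⟩ − ⟨u, w⟩_P + (1/2)‖w‖_P² + g(w)
    (hv : ∀ w : H,
      ⟪f' u, v⟫ - ⟪u, P v⟫ + (1/2) * ⟪v, P v⟫ + g v ≤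
      ⟪f' u, w⟫ - ⟪u, P w⟫ + (1/2) * ⟪w, P w⟫ + g w)
    -- u* is a minimizer of f + g
    (hustar : ∀ w : H, f ustar + g ustar ≤ f w + g w) :
    θ * ((⟪f' u, u - v⟫ + g u - g v - (1/2) * ⟪u - v, P (u - v)⟫)
        + (1/2) * ⟪u - v, P (u - v)⟫) ≥
    θ * (f u + g u - (f ustar + g ustar))
      - (1/2) * ⟪u - ustar, P (u - ustar)⟫
      + (1/2) * ⟪(u + θ • (v - u)) - ustar, P ((u + θ • (v - u)) - ustar)⟫
      + (θ/2) * (2 - θ) * ⟪u - v, P (u - v)⟫ := by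
  obtain ⟨hθ0, hθ1⟩ := hθ
  set d := ustar - v with hd
  -- Step 1: variational inequality for v, with the extra quadratic term
  have hkey : 0 ≤ ⟪f' u, d⟫ + ⟪v - u, P d⟫ + g ustar - g v := by
    set A := ⟪f' u, d⟫ + ⟪v - u, P d⟫ + g ustar - g v with hA
    set B := ⟪d, P d⟫ with hB
    have hB0 : 0 ≤ B := hP_pos d
    have hstep : ∀ t : ℝ, 0 < t → t ≤ 1 → 0 ≤ A + (t / 2) * B := by
      intro t ht0 ht1
      have h1 := hv (v + t • d)
      have hgc : g (v + t • d) ≤ (1 - t) * g v + t * g ustar := by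
        have hpt : v + t • d = (1 - t) • v + t • ustar := by rw [hd]; module
        have := hg.2 (Set.mem_univ v) (Set.mem_univ ustar)
          (by linarith : (0:ℝ) ≤ 1 - t) ht0.le (by ring)
        rw [hpt]
        simpa using this
      have hsym : ⟪d, P v⟫ = ⟪v, P d⟫ := by
        rw [← hP_sa d v, real_inner_comm]
      have hexp1 : ⟪f' u, v + t • d⟫ = ⟪f' u, v⟫ + t * ⟪f' u, d⟫ := by
        simp [inner_add_right, real_inner_smul_right]
      have hexp2 : ⟪u, P (v + t • d)⟫ = ⟪u, P v⟫ + t * ⟪u, P d⟫ := by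
        simp [inner_add_right, real_inner_smul_right]
      have hexp3 : ⟪v + t • d, P (v + t • d)⟫
          = ⟪v, P v⟫ + 2 * t * ⟪v, P d⟫ + t ^ 2 * B := by
        simp only [map_add, map_smul, inner_add_left, inner_add_right,
          real_inner_smul_left, real_inner_smul_right, hB]
        rw [hsym]; ring
      rw [hexp1, hexp2, hexp3] at h1
      have hsub : ⟪v - u, P d⟫ = ⟪v, P d⟫ - ⟪u, P d⟫ := by
        simp [inner_sub_left]
      have h2 : 0 ≤ t * A + (t ^ 2 / 2) * B := by
        simp only [hA, hsub]
        nlinarith [h1, hgc]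
      nlinarith [h2, ht0]
    by_contra hcon
    push_neg at hcon
    have hAneg : A < 0 := hcon
    set t : ℝ := min 1 (-A / (B + 1)) with htdef
    have ht0 : 0 < t := lt_min one_pos (div_pos (by linarith) (by linarith))
    have ht1 : t ≤ 1 := min_le_left _ _
    have ht2 : t ≤ -A / (B + 1) := min_le_right _ _
    have := hstep t ht0 ht1
    have htB : t * (B + 1) ≤ -A := by
      rw [← le_div_iff₀ (by linarith : (0:ℝ) < B + 1)] at *
      exact ht2
    nlinarith [ht0, hB0]
  -- Step 2: gradient inequality for f at u evaluated at ustar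
  have hgrad : f u + ⟪f' u, ustar - u⟫ ≤ f ustar := hpgcg_grad_ineq f hf (hf' u)
  -- Step 3: combine, linear in θ
  have hcomb : (f u + g u - (f ustar + g ustar)) + ⟪u - ustar, P (v - u)⟫
      + ⟪u - v, P (u - v)⟫ ≤ ⟪f' u, u - v⟫ + g u - g v := by
    have hsym1 : ∀ x y : H, ⟪x, P y⟫ = ⟪y, P x⟫ := by
      intro x y; rw [← hP_sa x y, real_inner_comm]
    -- expand all bilinear terms
    simp only [hd, map_sub, inner_sub_left, inner_sub_right] at hkey hgrad ⊢
    have s1 := hsym1 u v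
    have s2 := hsym1 u ustar
    have s3 := hsym1 v ustar
    linarith [hkey, hgrad, s1, s2, s3]
  have hmul := mul_le_mul_of_nonneg_left hcomb hθ0
  -- Step 4: expand the quadratic in the goal and finish
  have hsym1 : ∀ x y : H, ⟪x, P y⟫ = ⟪y, P x⟫ := by
    intro x y; rw [← hP_sa x y, real_inner_comm]
  have s1 := hsym1 u v
  have s2 := hsym1 u ustar
  have s3 := hsym1 v ustar
  simp only [map_add, map_sub, map_smul, inner_add_left, inner_add_right,
    inner_sub_left, inner_sub_right, real_inner_smul_left, real_inner_smul_right]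
    at hmul ⊢
  simp only [s1, s2, s3] at hmul ⊢
  nlinarith [hmul]
end

section
/- Let {u^k} be generated by the HPGCG iteration u^{k+1} = u^k + θ_k(v^k − u^k) with v^k = v(u^k) and step-size θ_k = min(1, (D(u^k) + (1/2)‖u^k − v^k‖_P²) / (2 D_f(u^k, v^k))). Then for all k ≥ 0, r(u^{k+1}) − r(u^k) ≤ −(θ_k/2)(D(u^k) + (1/2)‖u^k − v^k‖_P²), where r(u) = (f+g)(u) − inf(f+g). -/
open RealInnerProductSpace

lemma grad_first_order {H : Type*} [NormedAddCommGroup H] [InnerProductSpace ℝ H] [CompleteSpace H]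
    {f : H → ℝ} {f' : H → H} (hf : ConvexOn ℝ Set.univ f)
    (hf' : ∀ x, HasGradientAt f (f' x) x) (x y : H) :
    f x + ⟪f' x, y - x⟫ ≤ f y := by
  set φ : ℝ → ℝ := fun t => f (x + t • (y - x)) with hφdef
  have hconv : ConvexOn ℝ Set.univ φ := by
    refine ⟨convex_univ, fun a _ b _ ta tb hta htb htab => ?_⟩
    have hpt : x + (ta * a + tb * b) • (y - x)
        = ta • (x + a • (y - x)) + tb • (x + b • (y - x)) := by
      match_scalars <;> linarith [htab]
    simp only [hφdef, smul_eq_mul, hpt]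
    exact hf.2 (Set.mem_univ _) (Set.mem_univ _) hta htb htab
  have hc : HasDerivAt (fun t : ℝ => x + t • (y - x)) (y - x) 0 := by
    simpa using ((hasDerivAt_id (0:ℝ)).smul_const (y - x)).const_add x
  have hfd : HasFDerivAt f (InnerProductSpace.toDual ℝ H (f' x))
      ((fun t : ℝ => x + t • (y - x)) 0) := by
    simpa using (hf' x).hasFDerivAt
  have hd : HasDerivAt φ ⟪f' x, y - x⟫ 0 := by
    have h := hfd.comp_hasDerivAt 0 hc
    simp at h
    exact h
  have := hconv.le_slope_of_hasDerivAt (Set.mem_univ (0:ℝ)) (Set.mem_univ 1) one_pos hd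
  rw [slope_def_field] at this
  simp only [hφdef, one_smul, zero_smul, add_zero] at this
  have h1 : x + (y - x) = y := by abel
  rw [h1] at this
  linarith [this]

/-- Lemma 2 of the HPGCG analysis (sufficient decrease). -/
theorem hpgcg_lemma2
    {H : Type*} [NormedAddCommGroup H] [InnerProductSpace ℝ H] [CompleteSpace H]
    (f : H → ℝ) (f' : H → H) (g : H → ℝ) (P : H →L[ℝ] H) (L : NNReal)
    (Df : H → H → ℝ)
    (hf : ConvexOn ℝ Set.univ f)
    (hf' : ∀ x, HasGradientAt f (f' x) x)
    (hf'_lip : LipschitzWith L f')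
    (hg : ConvexOn ℝ Set.univ g)
    (hg_lsc : LowerSemicontinuous g)
    (hP_sa : ∀ x y : H, ⟪P x, y⟫ = ⟪x, P y⟫)
    (hP_pos : ∀ x : H, 0 ≤ ⟪x, P x⟫)
    -- the three standing properties of D_f
    (hDf1 : ∀ x y : H, f y - f x - ⟪f' x, y - x⟫ ≤ Df x y)
    (hDf2 : ∀ x y : H, ∀ θ ∈ Set.Icc (0:ℝ) 1, Df x (x + θ • (y - x)) ≤ θ^2 * Df x y)
    (hDf3 : ∀ s : Set H, Bornology.IsBounded s → ∃ M, ∀ x ∈ s, ∀ y ∈ s, Df x y ≤ M)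
    -- u* is a minimizer of f + g (so that r(u) = (f+g)(u) − inf(f+g))
    (ustar : H) (hustar : ∀ w : H, f ustar + g ustar ≤ f w + g w)
    -- the HPGCG iteration
    (u v : ℕ → H) (θ : ℕ → ℝ)
    (D : ℕ → ℝ)
    (hD : ∀ k, D k = ⟪f' (u k), u k - v k⟫ + g (u k) - g (v k)
        - (1/2) * ⟪u k - v k, P (u k - v k)⟫)
    (hv : ∀ k, ∀ w : H,
      ⟪f' (u k), v k⟫ - ⟪u k, P (v k)⟫ + (1/2) * ⟪v k, P (v k)⟫ + g (v k) ≤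
      ⟪f' (u k), w⟫ - ⟪u k, P w⟫ + (1/2) * ⟪w, P w⟫ + g w)
    (hθ : ∀ k, θ k = min 1
      ((D k + (1/2) * ⟪u k - v k, P (u k - v k)⟫) / (2 * Df (u k) (v k))))
    (hupd : ∀ k, u (k + 1) = u k + θ k • (v k - u k)) :
    ∀ k : ℕ,
      (f (u (k+1)) + g (u (k+1)) - (f ustar + g ustar))
        - (f (u k) + g (u k) - (f ustar + g ustar)) ≤
      - (θ k / 2) * (D k + (1/2) * ⟪u k - v k, P (u k - v k)⟫) := by
  intro k
  set U := u k with hU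
  set V := v k with hV
  set Θ := θ k with hΘ
  set Q : ℝ := ⟪U - V, P (U - V)⟫ with hQdef
  have hQ : (0:ℝ) ≤ Q := hP_pos _
  set Δ : ℝ := ⟪f' U, U - V⟫ + g U - g V with hΔdef
  have hDΔ : D k + (1/2) * Q = Δ := by rw [hD k]; ring
  -- expansion of Q
  have hsym : ⟪V, P U⟫ = ⟪U, P V⟫ := by rw [← hP_sa]; exact real_inner_comm _ _
  have hQexp : Q = ⟪U, P U⟫ - 2 * ⟪U, P V⟫ + ⟪V, P V⟫ := by
    simp only [hQdef, map_sub, inner_sub_left, inner_sub_right, hsym]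
    ring
  have hinnUV : ⟪f' U, U - V⟫ = ⟪f' U, U⟫ - ⟪f' U, V⟫ := inner_sub_right _ _ _
  have hΔQ : Q / 2 ≤ Δ := by
    have h := hv k U
    rw [hΔdef, hinnUV]
    linarith [h, hQexp]
  have hΔ0 : (0:ℝ) ≤ Δ := by linarith
  -- nonnegativity of Df
  have hDf0 : (0:ℝ) ≤ Df U V := by
    have h1 := grad_first_order hf hf' U V
    have h2 := hDf1 U V
    linarith
  -- step size bounds
  have hθk : Θ = min 1 (Δ / (2 * Df U V)) := by rw [hΘ, hθ k, hDΔ]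
  have hθ1 : Θ ≤ 1 := by rw [hθk]; exact min_le_left _ _
  have hθ0 : (0:ℝ) ≤ Θ := by
    rw [hθk]
    exact le_min zero_le_one (div_nonneg hΔ0 (by linarith))
  -- key inequality
  have key : Θ ^ 2 * Df U V ≤ Θ / 2 * Δ := by
    rcases eq_or_lt_of_le hDf0 with h0 | hpos
    · rw [← h0]
      have : (0:ℝ) ≤ Θ / 2 * Δ := by positivity
      linarith
    · rcases le_total 1 (Δ / (2 * Df U V)) with hr | hr
      · have hΘ1 : Θ = 1 := by rw [hθk]; exact min_eq_left hr
        have h2 : 2 * Df U V ≤ Δ := (one_le_div (by linarith)).mp hr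
        rw [hΘ1]; nlinarith
      · have hΘr : Θ = Δ / (2 * Df U V) := by rw [hθk]; exact min_eq_right hr
        have hne : Df U V ≠ 0 := ne_of_gt hpos
        have heq : (Δ / (2 * Df U V)) ^ 2 * Df U V = (Δ / (2 * Df U V)) / 2 * Δ := by
          field_simp
        rw [hΘr]
        exact le_of_eq heq
  -- f bound
  have hfb : f (U + Θ • (V - U)) ≤ f U + Θ * ⟪f' U, V - U⟫ + Θ ^ 2 * Df U V := by
    have h1 := hDf1 U (U + Θ • (V - U))
    have h2 := hDf2 U V Θ ⟨hθ0, hθ1⟩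
    have h3 : ⟪f' U, (U + Θ • (V - U)) - U⟫ = Θ * ⟪f' U, V - U⟫ := by
      rw [add_sub_cancel_left, real_inner_smul_right]
    rw [h3] at h1
    linarith
  -- g bound
  have hgb : g (U + Θ • (V - U)) ≤ (1 - Θ) * g U + Θ * g V := by
    have h := hg.2 (Set.mem_univ U) (Set.mem_univ V) (by linarith : (0:ℝ) ≤ 1 - Θ) hθ0
      (by ring)
    have hpt : (1 - Θ) • U + Θ • V = U + Θ • (V - U) := by module
    rw [hpt] at h
    simpa using h
  -- combine
  rw [hupd k, hDΔ]
  have hVU : ⟪f' U, V - U⟫ = -⟪f' U, U - V⟫ := by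
    rw [← inner_neg_right, neg_sub]
  rw [hVU] at hfb
  rw [hΔdef] at key
  nlinarith [hfb, hgb, key]
end

section
/- The sequences {u^k} and {v^k} produced by the HPGCG algorithm are bounded. -/
open RealInnerProductSpace

lemma hpgcg_bregman
    {H : Type*} [NormedAddCommGroup H] [InnerProductSpace ℝ H] [CompleteSpace H]
    {f : H → ℝ} {f' : H → H}
    (hf : ConvexOn ℝ Set.univ f) (hf' : ∀ x, HasGradientAt f (f' x) x)
    (x y : H) : ⟪f' x, y - x⟫ ≤ f y - f x := by
  set c : ℝ → H := fun t => t • (y - x) + x with hc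
  have hline : c = fun t => AffineMap.lineMap x y t := by
    funext t; simp [hc, AffineMap.lineMap_apply]
  have hconv : ConvexOn ℝ Set.univ (f ∘ c) := by
    have h2 := hf.comp_affineMap (AffineMap.lineMap x y : ℝ →ᵃ[ℝ] H)
    rw [hline]
    simpa using h2
  have hcd : HasDerivAt c (y - x) 0 := by
    simpa [hc] using ((hasDerivAt_id (0:ℝ)).smul_const (y - x)).add_const x
  have hc0 : c 0 = x := by simp [hc]
  have hfd : HasFDerivAt f (InnerProductSpace.toDual ℝ H (f' x)) (c 0) := by
    rw [hc0]; exact hf' x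
  have hderiv : HasDerivAt (f ∘ c) ⟪f' x, y - x⟫ 0 := by
    simpa using hfd.comp_hasDerivAt 0 hcd
  have := hconv.le_slope_of_hasDerivAt (Set.mem_univ 0) (Set.mem_univ 1) one_pos hderiv
  simpa [slope_def_field, hc] using this

/-- Lemma 3 of the HPGCG analysis: the sequences {uᵏ} and {vᵏ}
produced by the HPGCG algorithm are bounded. -/
theorem hpgcg_lemma3_boundedness
    {H : Type*} [NormedAddCommGroup H] [InnerProductSpace ℝ H] [CompleteSpace H]
    (f : H → ℝ) (f' : H → H) (g : H → ℝ) (P : H →L[ℝ] H) (L : NNReal)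
    (Df : H → H → ℝ)
    (hf : ConvexOn ℝ Set.univ f)
    (hf' : ∀ x, HasGradientAt f (f' x) x)
    (hf'_lip : LipschitzWith L f')
    (hg : ConvexOn ℝ Set.univ g)
    (hg_lsc : LowerSemicontinuous g)
    (hP_sa : ∀ x y : H, ⟪P x, y⟫ = ⟪x, P y⟫)
    (hP_pos : ∀ x : H, 0 ≤ ⟪x, P x⟫)
    -- f + g is coercive
    (hcoercive : ∀ c : ℝ, ∃ R : ℝ, ∀ x : H, R ≤ ‖x‖ → c ≤ f x + g x)
    -- (1/2)‖·‖_P² + g is strongly coercive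
    (hscoercive : ∀ c : ℝ, ∃ R : ℝ, ∀ x : H, R ≤ ‖x‖ →
      c * ‖x‖ ≤ (1/2) * ⟪x, P x⟫ + g x)
    -- the three standing properties of D_f
    (hDf1 : ∀ x y : H, f y - f x - ⟪f' x, y - x⟫ ≤ Df x y)
    (hDf2 : ∀ x y : H, ∀ θ ∈ Set.Icc (0:ℝ) 1, Df x (x + θ • (y - x)) ≤ θ^2 * Df x y)
    (hDf3 : ∀ s : Set H, Bornology.IsBounded s → ∃ M, ∀ x ∈ s, ∀ y ∈ s, Df x y ≤ M)
    -- the HPGCG iteration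
    (u v : ℕ → H) (θ : ℕ → ℝ)
    (D : ℕ → ℝ)
    (hD : ∀ k, D k = ⟪f' (u k), u k - v k⟫ + g (u k) - g (v k)
        - (1/2) * ⟪u k - v k, P (u k - v k)⟫)
    (hv : ∀ k, ∀ w : H,
      ⟪f' (u k), v k⟫ - ⟪u k, P (v k)⟫ + (1/2) * ⟪v k, P (v k)⟫ + g (v k) ≤
      ⟪f' (u k), w⟫ - ⟪u k, P w⟫ + (1/2) * ⟪w, P w⟫ + g w)
    (hθ : ∀ k, θ k = min 1
      ((D k + (1/2) * ⟪u k - v k, P (u k - v k)⟫) / (2 * Df (u k) (v k))))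
    (hupd : ∀ k, u (k + 1) = u k + θ k • (v k - u k)) :
    (∃ M : ℝ, ∀ k : ℕ, ‖u k‖ ≤ M) ∧ (∃ M : ℝ, ∀ k : ℕ, ‖v k‖ ≤ M) := by
  have breg := hpgcg_bregman hf hf'
  set F : H → ℝ := fun x => f x + g x with hF
  have hq_nonneg : ∀ k, 0 ≤ (1/2) * ⟪u k - v k, P (u k - v k)⟫ := by
    intro k
    have := hP_pos (u k - v k)
    linarith
  have hexp : ∀ k, ⟪u k - v k, P (u k - v k)⟫
      = ⟪u k, P (u k)⟫ - 2 * ⟪u k, P (v k)⟫ + ⟪v k, P (v k)⟫ := by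
    intro k
    have h1 : ⟪v k, P (u k)⟫ = ⟪u k, P (v k)⟫ := by
      rw [real_inner_comm]; exact hP_sa (u k) (v k)
    rw [map_sub, inner_sub_left, inner_sub_right, inner_sub_right, h1]; ring
  have hD_nonneg : ∀ k, 0 ≤ D k := by
    intro k
    have h := hv k (u k)
    have h2 : ⟪f' (u k), u k - v k⟫ = ⟪f' (u k), u k⟫ - ⟪f' (u k), v k⟫ :=
      inner_sub_right _ _ _
    rw [hD k, h2, hexp k]
    linarith
  have hDf0 : ∀ k, 0 ≤ Df (u k) (v k) := by
    intro k
    have h1 := breg (u k) (v k)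
    have h2 := hDf1 (u k) (v k)
    linarith
  have hθ0 : ∀ k, 0 ≤ θ k := by
    intro k
    rw [hθ k]
    refine le_min zero_le_one (div_nonneg ?_ ?_)
    · linarith [hD_nonneg k, hq_nonneg k]
    · linarith [hDf0 k]
  have hθ1 : ∀ k, θ k ≤ 1 := fun k => (hθ k) ▸ min_le_left _ _
  have hdec : ∀ k, F (u (k + 1)) ≤ F (u k) := by
    intro k
    have ht0 := hθ0 k
    have ht1 := hθ1 k
    have hstep := hupd k
    -- f part
    have h1 := hDf1 (u k) (u (k + 1))
    have h4 : Df (u k) (u (k + 1)) ≤ (θ k)^2 * Df (u k) (v k) := by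
      rw [hstep]; exact hDf2 (u k) (v k) (θ k) ⟨ht0, ht1⟩
    have h3 : ⟪f' (u k), u (k + 1) - u k⟫ = θ k * ⟪f' (u k), v k - u k⟫ := by
      rw [hstep]
      simp [real_inner_smul_right]
    -- g part
    have hcomb : u (k + 1) = (1 - θ k) • u k + θ k • v k := by
      rw [hstep, sub_smul, one_smul, smul_sub]; abel
    have hgub : g (u (k + 1)) ≤ (1 - θ k) * g (u k) + θ k * g (v k) := by
      rw [hcomb]
      exact hg.2 (Set.mem_univ _) (Set.mem_univ _) (by linarith) ht0 (by ring)
    -- key: θ² Df ≤ θ (D + q)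
    have hDq : D k + (1/2) * ⟪u k - v k, P (u k - v k)⟫
        = ⟪f' (u k), u k - v k⟫ + g (u k) - g (v k) := by rw [hD k]; ring
    have hkey : (θ k)^2 * Df (u k) (v k)
        ≤ θ k * (D k + (1/2) * ⟪u k - v k, P (u k - v k)⟫) := by
      set N := D k + (1/2) * ⟪u k - v k, P (u k - v k)⟫ with hN
      have hN0 : 0 ≤ N := by have := hD_nonneg k; have := hq_nonneg k; rw [hN]; linarith
      rcases (hDf0 k).eq_or_lt with hz | hpos
      · rw [← hz]
        simpa using mul_nonneg ht0 hN0
      · have hθle : θ k ≤ N / (2 * Df (u k) (v k)) := by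
          rw [hθ k]; exact min_le_right _ _
        have h2t : θ k * (2 * Df (u k) (v k)) ≤ N :=
          (le_div_iff₀ (by positivity)).mp hθle
        nlinarith [mul_le_mul_of_nonneg_left h2t ht0,
          mul_nonneg (mul_nonneg ht0 ht0) (hDf0 k)]
    have hiv : ⟪f' (u k), v k - u k⟫ = -⟪f' (u k), u k - v k⟫ := by
      rw [← inner_neg_right, neg_sub]
    have hfub : f (u (k + 1)) ≤ f (u k) + θ k * ⟪f' (u k), v k - u k⟫
        + (θ k)^2 * Df (u k) (v k) := by linarith
    show f (u (k + 1)) + g (u (k + 1)) ≤ f (u k) + g (u k)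
    rw [hiv] at hfub
    rw [hDq] at hkey
    have h2 : ⟪f' (u k), u k - v k⟫ = ⟪f' (u k), u k⟫ - ⟪f' (u k), v k⟫ :=
      inner_sub_right _ _ _
    rw [h2] at hfub hkey
    nlinarith [hgub, hfub, hkey]
  have hmono : ∀ k, F (u k) ≤ F (u 0) := by
    intro k
    induction k with
    | zero => exact le_refl _
    | succ n ih => exact le_trans (hdec n) ih
  have hF0 : F (u 0) = f (u 0) + g (u 0) := rfl
  obtain ⟨R, hR⟩ := hcoercive (F (u 0) + 1)
  have hMu : ∀ k, ‖u k‖ ≤ R := by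
    intro k
    by_contra h
    push_neg at h
    have h1 := hR (u k) h.le
    have h2 := hmono k
    simp only [hF] at h2 ⊢
    linarith [hF0]
  have hMu0 : 0 ≤ R := le_trans (norm_nonneg (u 0)) (hMu 0)
  refine ⟨⟨R, hMu⟩, ?_⟩
  have hA : ∀ k, ‖f' (u k)‖ ≤ ‖f' 0‖ + L * R := by
    intro k
    have h1 := hf'_lip.dist_le_mul (u k) 0
    rw [dist_eq_norm, dist_eq_norm, sub_zero] at h1
    have h2 := norm_sub_norm_le (f' (u k)) (f' 0)
    have h3 : (L : ℝ) * ‖u k‖ ≤ L * R := mul_le_mul_of_nonneg_left (hMu k) L.2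
    linarith
  have hGb : ∀ k, g (u k) ≤ F (u 0) - f 0 + ‖f' 0‖ * R := by
    intro k
    have h1 := breg 0 (u k)
    rw [sub_zero] at h1
    have h2 := abs_real_inner_le_norm (f' 0) (u k)
    have h2' := neg_abs_le ⟪f' 0, u k⟫
    have h3 := hmono k
    have h4 : ‖f' 0‖ * ‖u k‖ ≤ ‖f' 0‖ * R :=
      mul_le_mul_of_nonneg_left (hMu k) (norm_nonneg _)
    simp only [hF] at h3
    linarith [hF0]
  obtain ⟨B, hB⟩ : ∃ B : ℝ, B = (‖f' 0‖ + L * R) * R + (F (u 0) - f 0 + ‖f' 0‖ * R) :=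
    ⟨_, rfl⟩
  have hvalB : ∀ k, ⟪f' (u k), v k⟫ - ⟪u k, P (v k)⟫
      + (1/2) * ⟪v k, P (v k)⟫ + g (v k) ≤ B := by
    intro k
    refine le_trans (hv k (u k)) ?_
    have h1 : ⟪f' (u k), u k⟫ ≤ (‖f' 0‖ + L * R) * R := by
      calc ⟪f' (u k), u k⟫ ≤ ‖f' (u k)‖ * ‖u k‖ := real_inner_le_norm _ _
        _ ≤ (‖f' 0‖ + L * R) * R := by
            apply mul_le_mul (hA k) (hMu k) (norm_nonneg _)
            have : (0:ℝ) ≤ (L : ℝ) * R := mul_nonneg L.2 hMu0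
            positivity
    have h2 := hP_pos (u k)
    have h3 := hGb k
    rw [hB]
    linarith
  obtain ⟨C, hC⟩ : ∃ C : ℝ, C = ‖f' 0‖ + L * R + ‖P‖ * R := ⟨_, rfl⟩
  obtain ⟨R', hR'⟩ := hscoercive (C + 1)
  refine ⟨max R' B, fun k => ?_⟩
  by_cases hcase : R' ≤ ‖v k‖
  · have h1 := hR' (v k) hcase
    have h2 : -(C * ‖v k‖) ≤ ⟪f' (u k), v k⟫ - ⟪u k, P (v k)⟫ := by
      have hsa : ⟪u k, P (v k)⟫ = ⟪P (u k), v k⟫ := (hP_sa (u k) (v k)).symm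
      rw [hsa, ← inner_sub_left]
      have habs := abs_real_inner_le_norm (f' (u k) - P (u k)) (v k)
      have habs' := neg_abs_le ⟪f' (u k) - P (u k), v k⟫
      have hnorm : ‖f' (u k) - P (u k)‖ ≤ C := by
        have hsub := norm_sub_le (f' (u k)) (P (u k))
        have hPu : ‖P (u k)‖ ≤ ‖P‖ * R :=
          le_trans (P.le_opNorm (u k)) (mul_le_mul_of_nonneg_left (hMu k) (norm_nonneg _))
        rw [hC]
        linarith [hA k]
      have hmul : ‖f' (u k) - P (u k)‖ * ‖v k‖ ≤ C * ‖v k‖ :=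
        mul_le_mul_of_nonneg_right hnorm (norm_nonneg _)
      linarith
    have h3 := hvalB k
    have hvB : ‖v k‖ ≤ B := by nlinarith [h1, h2, h3]
    exact le_trans hvB (le_max_right _ _)
  · push_neg at hcase
    exact le_trans hcase.le (le_max_left _ _)
end

section
/- Let f(u) = (1/2)‖u − ξ‖² and g_α(v) = α‖v‖_{1,2}, and let G_α(u,v) = f(u) + g_α(∇u) + f*(∇·v) + g_α*(v) be the primal-dual gap for the ROF problem. Then for every noise-free image u† ∈ ℝⁿ, min over v of G_α(u†, v) is attained at v^α (the dual solution) and min_v G_α(u†, v) = (1/2)‖u† − u^α‖² + D^{g_α}_{v^α}(∇u†, ∇u^α) ≥ (1/2)‖u† − u^α‖², where u^α is the ROF solution with data ξ and parameter α. -/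
open RealInnerProductSpace

/-- for the ROF problem, for every noise-free image u†,
min over feasible v of the primal–dual gap G_α(u†, v) is attained at the dual
solution vα, and equals (1/2)‖u† − uα‖² + D^{gα}_{vα}(∇u†, ∇uα), which is
≥ (1/2)‖u† − uα‖².  Here `grad` is the discrete gradient, the divergence is
∇· = −grad*, Gap u v = f(u) + gα(∇u) + f*(∇·v) + gα*(v), and on the feasible
set {v : ‖v‖_{∞,2} ≤ α} the indicator gα* vanishes. -/
theorem rof_gap_majorizes_squared_distance
    {n : ℕ} (α : ℝ) (hα : 0 < α)
    (ξ udag uα : EuclideanSpace ℝ (Fin n))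
    (vα : PiLp 2 fun _ : Fin n => EuclideanSpace ℝ (Fin 2))
    (grad : EuclideanSpace ℝ (Fin n) →L[ℝ]
      PiLp 2 fun _ : Fin n => EuclideanSpace ℝ (Fin 2))
    (f fs : EuclideanSpace ℝ (Fin n) → ℝ)
    (gα : (PiLp 2 fun _ : Fin n => EuclideanSpace ℝ (Fin 2)) → ℝ)
    (hf : ∀ x, f x = (1/2) * ‖x - ξ‖^2)
    (hfs : ∀ x, fs x = (1/2) * ‖x + ξ‖^2 - (1/2) * ‖ξ‖^2)
    (hgα : ∀ v, gα v = α * ∑ i, ‖v i‖)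
    -- uα solves the ROF (primal) problem with data ξ and parameter α
    (huα : ∀ w, f uα + gα (grad uα) ≤ f w + gα (grad w))
    -- vα is dual feasible and (uα, vα) satisfies the optimality system
    (hvα_feas : ∀ i, ‖vα i‖ ≤ α)
    (hopt₁ : -(ContinuousLinearMap.adjoint grad vα) = uα - ξ)
    -- ∇uα ∈ ∂gα*(vα): normal-cone inequality for the indicator of the ball
    (hopt₂ : ∀ w, (∀ i, ‖w i‖ ≤ α) → ⟪grad uα, w - vα⟫ ≤ 0) :
    -- the minimum over feasible v of the gap is attained at vα ...
    (∀ v, (∀ i, ‖v i‖ ≤ α) →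
      f udag + gα (grad udag) + fs (-(ContinuousLinearMap.adjoint grad vα)) ≤
      f udag + gα (grad udag) + fs (-(ContinuousLinearMap.adjoint grad v))) ∧
    -- ... equals (1/2)‖u† − uα‖² plus the Bregman divergence of gα ...
    (f udag + gα (grad udag) + fs (-(ContinuousLinearMap.adjoint grad vα)) =
      (1/2) * ‖udag - uα‖^2
        + (gα (grad udag) - gα (grad uα) - ⟪vα, grad udag - grad uα⟫)) ∧
    -- ... and hence majorizes (1/2)‖u† − uα‖²
    ((1/2) * ‖udag - uα‖^2 ≤
      f udag + gα (grad udag) + fs (-(ContinuousLinearMap.adjoint grad vα))) := by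
  set D := ContinuousLinearMap.adjoint grad with hDdef
  have hD : D vα = ξ - uα := by
    have h := neg_eq_iff_eq_neg.mp hopt₁
    rw [h, neg_sub]
  -- key Cauchy-Schwarz bound
  have key : ∀ z : PiLp 2 fun _ : Fin n => EuclideanSpace ℝ (Fin 2),
      ⟪vα, z⟫ ≤ α * ∑ i, ‖z i‖ := by
    intro z
    rw [PiLp.inner_apply, Finset.mul_sum]
    apply Finset.sum_le_sum
    intro i _
    calc ⟪vα i, z i⟫ ≤ ‖vα i‖ * ‖z i‖ := real_inner_le_norm _ _
      _ ≤ α * ‖z i‖ := mul_le_mul_of_nonneg_right (hvα_feas i) (norm_nonneg _)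
  -- gα(grad uα) = ⟪vα, grad uα⟫
  have eq1 : gα (grad uα) = ⟪vα, grad uα⟫ := by
    have upper : ⟪vα, grad uα⟫ ≤ gα (grad uα) := by rw [hgα]; exact key _
    have lower : gα (grad uα) ≤ ⟪vα, grad uα⟫ := by
      set w : PiLp 2 fun _ : Fin n => EuclideanSpace ℝ (Fin 2) :=
        WithLp.toLp 2 (fun i => (α / ‖grad uα i‖) • grad uα i) with hw
      have hwfeas : ∀ i, ‖w i‖ ≤ α := by
        intro i
        by_cases h : grad uα i = 0
        · simp [hw, h, hα.le]
        · rw [hw]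
          simp only [PiLp.toLp_apply]
          rw [norm_smul, Real.norm_eq_abs, abs_of_nonneg
            (div_nonneg hα.le (norm_nonneg _)),
            div_mul_cancel₀ _ (norm_ne_zero_iff.mpr h)]
      have hinner : ⟪grad uα, w⟫ = α * ∑ i, ‖grad uα i‖ := by
        rw [PiLp.inner_apply, Finset.mul_sum]
        apply Finset.sum_congr rfl
        intro i _
        rw [hw]
        simp only [PiLp.toLp_apply]
        rw [real_inner_smul_right, real_inner_self_eq_norm_sq]
        by_cases h : grad uα i = 0
        · simp [h]
        · have hg : ‖grad uα i‖ ≠ 0 := norm_ne_zero_iff.mpr h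
          field_simp
      have h2 := hopt₂ w hwfeas
      rw [inner_sub_right] at h2
      rw [hgα]
      have : ⟪grad uα, vα⟫ = ⟪vα, grad uα⟫ := real_inner_comm _ _
      linarith [hinner ▸ h2]
    linarith
  have hadj : ∀ x : EuclideanSpace ℝ (Fin n), ⟪vα, grad x⟫ = ⟪ξ - uα, x⟫ := by
    intro x
    rw [← ContinuousLinearMap.adjoint_inner_left, ← hDdef, hD]
  have hfvα : fs (-(D vα)) = (1/2) * ‖uα‖^2 - (1/2) * ‖ξ‖^2 := by
    rw [hfs, hopt₁, sub_add_cancel]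
  refine ⟨?_, ?_, ?_⟩
  · intro v hv
    have h1 : (0:ℝ) ≤ ⟪grad uα, vα - v⟫ := by
      have := hopt₂ v hv
      rw [inner_sub_right] at this ⊢
      linarith
    have hx : -(D v) + ξ = uα + D (vα - v) := by
      rw [map_sub, hD]; abel
    have h2 : ⟪uα, D (vα - v)⟫ = ⟪grad uα, vα - v⟫ := by
      rw [hDdef, ContinuousLinearMap.adjoint_inner_right]
    have h3 : fs (-(D v)) = (1/2) * ‖uα + D (vα - v)‖^2 - (1/2) * ‖ξ‖^2 := by
      rw [hfs, hx]
    rw [hfvα, h3, norm_add_sq_real, h2]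
    nlinarith [sq_nonneg ‖D (vα - v)‖]
  · rw [hfvα, hf, norm_sub_sq_real udag ξ, norm_sub_sq_real udag uα,
      inner_sub_right, eq1, hadj udag, hadj uα, inner_sub_left, inner_sub_left,
      real_inner_comm ξ udag, real_inner_comm uα udag]
    ring
  · have hs : ⟪vα, grad udag⟫ ≤ gα (grad udag) := by rw [hgα]; exact key _
    have heq : f udag + gα (grad udag) + fs (-(D vα)) =
        (1/2) * ‖udag - uα‖^2
          + (gα (grad udag) - gα (grad uα) - ⟪vα, grad udag - grad uα⟫) := by
      rw [hfvα, hf, norm_sub_sq_real udag ξ, norm_sub_sq_real udag uα,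
        inner_sub_right, eq1, hadj udag, hadj uα, inner_sub_left, inner_sub_left,
        real_inner_comm ξ udag, real_inner_comm uα udag]
      ring
    rw [heq, inner_sub_right, eq1]
    linarith
end
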